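/- arXiv:1311.2661 — 4 statements merged into one kernel-verified Lean document; each statement's English description precedes it below -/
import Mathlib

section
/- Let (x_j)_{j≥0} be the iterates of the stochastic coordinate descent (SCD) method applied to minimizing f_β over the nonnegative orthant, started from x_0 ≥ 0, with coordinate indices i(j) chosen independently and uniformly at random from {1,…,n}. Suppose ‖x_j − x(β)‖₂ ≤ R holds for all iterates j (almost surely), and let l := 1/β and f_β* := f_β(x(β)). Then for every j ≥ 0, E‖x_j − x(β)‖² + (2/L_max) E(f_β(x_j) − f_β*) ≤ (1 − l/(n(l + L_max)))^j (R² + (2/L_max)(f_β(x_0) − f_β*)), where the expectation is over the random index choices i(0), …, i(j−1). -/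
open Matrix Finset MeasureTheory ProbabilityTheory

/-- Euclidean norm of a finitely-indexed real vector. -/
noncomputable def l2norm {ι : Type*} [Fintype ι] (x : ι → ℝ) : ℝ :=
  Real.sqrt (∑ i, (x i) ^ 2)

/-- Frobenius norm of a real matrix. -/
noncomputable def frobNorm {ι κ : Type*} [Fintype ι] [Fintype κ] (A : Matrix ι κ ℝ) : ℝ :=
  Real.sqrt (∑ i, ∑ j, (A i j) ^ 2)

/-- Euclidean inner product. -/
noncomputable def rdot {ι : Type*} [Fintype ι] (a b : ι → ℝ) : ℝ := ∑ i, a i * b i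

/-- The regularized quadratic penalty objective
`f_β(x) = cᵀx − ūᵀ(Ax−b) + (β/2)‖Ax−b‖² + (1/(2β))‖x−x̄‖²`. -/
noncomputable def fpen {ι κ : Type*} [Fintype ι] [Fintype κ]
    (A : Matrix ι κ ℝ) (b : ι → ℝ) (c : κ → ℝ) (ub : ι → ℝ) (xb : κ → ℝ)
    (β : ℝ) (x : κ → ℝ) : ℝ :=
  rdot c x - rdot ub (A.mulVec x - b) + (β / 2) * l2norm (A.mulVec x - b) ^ 2
    + (1 / (2 * β)) * l2norm (x - xb) ^ 2

/-- The gradient map `∇f_β(x) = c − Aᵀū + βAᵀ(Ax − b) + (1/β)(x − x̄)` of `f_β`. -/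
noncomputable def gradf {ι κ : Type*} [Fintype ι] [Fintype κ]
    (A : Matrix ι κ ℝ) (b : ι → ℝ) (c : κ → ℝ) (ub : ι → ℝ) (xb : κ → ℝ)
    (β : ℝ) (x : κ → ℝ) : κ → ℝ :=
  c - Aᵀ.mulVec ub + β • Aᵀ.mulVec (A.mulVec x - b) + (1 / β) • (x - xb)

/-! ### Auxiliary algebraic lemmas -/

lemma scd_rdot_eq {ι : Type*} [Fintype ι] (a b : ι → ℝ) : rdot a b = a ⬝ᵥ b := rfl

lemma scd_l2norm_sq {ι : Type*} [Fintype ι] (z : ι → ℝ) : l2norm z ^ 2 = z ⬝ᵥ z := by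
  rw [l2norm, Real.sq_sqrt (by positivity)]
  simp [dotProduct, sq]

lemma scd_tmv {ι κ : Type*} [Fintype ι] [Fintype κ] (A : Matrix ι κ ℝ) (u : ι → ℝ) (v : κ → ℝ) :
    (Aᵀ.mulVec u) ⬝ᵥ v = u ⬝ᵥ (A.mulVec v) := by
  rw [dotProduct_comm, dotProduct_mulVec, vecMul_transpose, dotProduct_comm]

/-- Exact second order expansion of the quadratic `fpen`. -/
lemma scd_fpen_expand {ι κ : Type*} [Fintype ι] [Fintype κ]
    (A : Matrix ι κ ℝ) (b : ι → ℝ) (c : κ → ℝ) (ub : ι → ℝ) (xb : κ → ℝ)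
    (β : ℝ) (hβ : β ≠ 0) (x y : κ → ℝ) :
    fpen A b c ub xb β y = fpen A b c ub xb β x
      + rdot (gradf A b c ub xb β x) (y - x)
      + (β / 2) * (A.mulVec (y - x) ⬝ᵥ A.mulVec (y - x))
      + (1 / (2 * β)) * ((y - x) ⬝ᵥ (y - x)) := by
  have hy : y = x + (y - x) := by ring
  rw [hy]; set d := y - x with hd
  simp only [fpen, gradf, scd_rdot_eq, scd_l2norm_sq, mulVec_add, add_sub_right_comm,
    add_sub_assoc]
  simp only [dotProduct_add, add_dotProduct, dotProduct_sub, sub_dotProduct,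
    dotProduct_smul, smul_dotProduct, smul_eq_mul, scd_tmv, add_sub_cancel_left]
  simp only [dotProduct_comm]
  field_simp
  simp only [sub_self, Matrix.mulVec_zero, dotProduct_zero, zero_dotProduct]
  ring

lemma scd_dot_self_nonneg {ι : Type*} [Fintype ι] (z : ι → ℝ) : 0 ≤ z ⬝ᵥ z :=
  Finset.sum_nonneg fun i _ => mul_self_nonneg _

lemma scd_dot_self_eq {ι : Type*} [Fintype ι] (z w : ι → ℝ) :
    (z - w) ⬝ᵥ (z - w) = ∑ i, (z i - w i) ^ 2 := by
  simp [dotProduct, sq]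

/-- Strong convexity (with parameter `1/β`) of `fpen`. -/
lemma scd_fpen_strong_convex {ι κ : Type*} [Fintype ι] [Fintype κ]
    (A : Matrix ι κ ℝ) (b : ι → ℝ) (c : κ → ℝ) (ub : ι → ℝ) (xb : κ → ℝ)
    (β : ℝ) (hβ : 0 < β) (x y : κ → ℝ) :
    fpen A b c ub xb β x + rdot (gradf A b c ub xb β x) (y - x)
      + (1 / (2 * β)) * ∑ i, (y i - x i) ^ 2 ≤ fpen A b c ub xb β y := by
  rw [scd_fpen_expand A b c ub xb β hβ.ne' x y]
  have h1 : 0 ≤ (β / 2) * (A.mulVec (y - x) ⬝ᵥ A.mulVec (y - x)) :=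
    mul_nonneg (by linarith) (scd_dot_self_nonneg _)
  have h2 : (y - x) ⬝ᵥ (y - x) = ∑ i, (y i - x i) ^ 2 := scd_dot_self_eq y x
  rw [h2] at *
  linarith

/-- Coordinate-wise expansion of `fpen`. -/
lemma scd_fpen_update {ι κ : Type*} [Fintype ι] [Fintype κ] [DecidableEq κ]
    (A : Matrix ι κ ℝ) (b : ι → ℝ) (c : κ → ℝ) (ub : ι → ℝ) (xb : κ → ℝ)
    (β : ℝ) (hβ : β ≠ 0) (x : κ → ℝ) (i : κ) (t : ℝ) :
    fpen A b c ub xb β (Function.update x i (x i + t))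
      = fpen A b c ub xb β x + t * gradf A b c ub xb β x i
        + (t ^ 2 / 2) * (β * (∑ k, (A k i) ^ 2) + 1 / β) := by
  have hdiff : Function.update x i (x i + t) - x = Pi.single i t := by
    funext j
    by_cases h : j = i
    · subst h; simp
    · simp [Function.update_of_ne h, Pi.single_apply, h]
  rw [scd_fpen_expand A b c ub xb β hβ x _, hdiff]
  have h1 : rdot (gradf A b c ub xb β x) (Pi.single i t)
      = gradf A b c ub xb β x i * t := by
    rw [scd_rdot_eq]; exact dotProduct_single _ _ _
  have h2 : (Pi.single i t : κ → ℝ) ⬝ᵥ Pi.single i t = t * t := by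
    rw [single_dotProduct, Pi.single_eq_same]
  have h3 : A.mulVec (Pi.single i t) ⬝ᵥ A.mulVec (Pi.single i t)
      = t ^ 2 * ∑ k, (A k i) ^ 2 := by
    rw [Matrix.mulVec_single]
    simp only [dotProduct]
    rw [Finset.mul_sum]
    exact Finset.sum_congr rfl fun k _ => by simp [Matrix.col]; ring
  rw [h1, h2, h3]
  field_simp
  ring

lemma scd_sum_sq_update {n : ℕ} (x w : Fin n → ℝ) (i : Fin n) (t : ℝ) :
    ∑ j, (Function.update x i (x i + t) j - w j) ^ 2
      = (∑ j, (x j - w j) ^ 2) + 2 * t * (x i - w i) + t ^ 2 := by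
  rw [← Finset.sum_erase_add Finset.univ _ (Finset.mem_univ i),
    ← Finset.sum_erase_add Finset.univ (fun j => (x j - w j) ^ 2) (Finset.mem_univ i)]
  have h1 : ∑ j ∈ Finset.univ.erase i, (Function.update x i (x i + t) j - w j) ^ 2
      = ∑ j ∈ Finset.univ.erase i, (x j - w j) ^ 2 := by
    refine Finset.sum_congr rfl fun j hj => ?_
    rw [Function.update_of_ne (Finset.ne_of_mem_erase hj)]
  rw [h1, Function.update_self]
  ring

/-- The SCD one-coordinate update. -/
noncomputable def scdStep {m n : ℕ} (A : Matrix (Fin m) (Fin n) ℝ) (b : Fin m → ℝ)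
    (c : Fin n → ℝ) (ub : Fin m → ℝ) (xb : Fin n → ℝ) (β L : ℝ)
    (x : Fin n → ℝ) (i : Fin n) : Fin n → ℝ :=
  Function.update x i (max 0 (x i - (1 / L) * gradf A b c ub xb β x i))

lemma scdStep_nonneg {m n : ℕ} (A : Matrix (Fin m) (Fin n) ℝ) (b : Fin m → ℝ)
    (c : Fin n → ℝ) (ub : Fin m → ℝ) (xb : Fin n → ℝ) (β L : ℝ)
    (x : Fin n → ℝ) (hx : ∀ j, 0 ≤ x j) (i : Fin n) :
    ∀ j, 0 ≤ scdStep A b c ub xb β L x i j := by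
  intro j
  by_cases h : j = i
  · subst h; simp [scdStep]
  · simpa [scdStep, Function.update_of_ne h] using hx j

/-- Key per-iteration contraction inequality for SCD, averaged over the coordinate. -/
lemma scd_key_step {m n : ℕ} (hn : 0 < n)
    (A : Matrix (Fin m) (Fin n) ℝ) (b : Fin m → ℝ) (c : Fin n → ℝ)
    (ub : Fin m → ℝ) (xb : Fin n → ℝ) (β : ℝ) (hβ : 0 < β)
    (xβ : Fin n → ℝ) (hβnn : ∀ j, 0 ≤ xβ j)
    (hβmin : ∀ x : Fin n → ℝ, (∀ j, 0 ≤ x j) →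
      fpen A b c ub xb β xβ ≤ fpen A b c ub xb β x)
    (L : ℝ) (hLpos : 0 < L) (hL : ∀ i, β * (∑ k, (A k i) ^ 2) + 1 / β ≤ L)
    (x : Fin n → ℝ) (hx : ∀ j, 0 ≤ x j) :
    ∑ i, ((∑ j, (scdStep A b c ub xb β L x i j - xβ j) ^ 2)
        + (2 / L) * (fpen A b c ub xb β (scdStep A b c ub xb β L x i)
            - fpen A b c ub xb β xβ))
    ≤ (n : ℝ) * (1 - (1 / β) / (n * (1 / β + L)))
        * ((∑ j, (x j - xβ j) ^ 2)
          + (2 / L) * (fpen A b c ub xb β x - fpen A b c ub xb β xβ)) := by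
  set l : ℝ := 1 / β with hldef
  have hlpos : 0 < l := by positivity
  set g : Fin n → ℝ := gradf A b c ub xb β x with hg
  set d : Fin n → ℝ := fun i => max 0 (x i - (1 / L) * g i) - x i with hd
  set V : ℝ := ∑ j, (x j - xβ j) ^ 2 with hV
  set F : ℝ := fpen A b c ub xb β x - fpen A b c ub xb β xβ with hF
  have hVnn : 0 ≤ V := Finset.sum_nonneg fun j _ => sq_nonneg _
  have hFnn : 0 ≤ F := by
    have := hβmin x hx
    simp only [hF]; linarith
  have hstep_eq : ∀ i, scdStep A b c ub xb β L x i
      = Function.update x i (x i + d i) := by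
    intro i
    simp only [scdStep, hd, ← hg]
    congr 1
    ring
  -- per-coordinate bound
  have hTbound : ∀ i, (∑ j, (scdStep A b c ub xb β L x i j - xβ j) ^ 2)
      + (2 / L) * (fpen A b c ub xb β (scdStep A b c ub xb β L x i)
          - fpen A b c ub xb β xβ)
      ≤ V + (2 / L) * F + (-(2 / L) * (g i * (x i - xβ i))) := by
    intro i
    rw [hstep_eq i]
    have hVup : ∑ j, (Function.update x i (x i + d i) j - xβ j) ^ 2
        = V + 2 * d i * (x i - xβ i) + d i ^ 2 := scd_sum_sq_update x xβ i (d i)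
    have hfup : fpen A b c ub xb β (Function.update x i (x i + d i))
        ≤ fpen A b c ub xb β x + d i * g i + (L / 2) * d i ^ 2 := by
      rw [scd_fpen_update A b c ub xb β hβ.ne' x i (d i), ← hg]
      have h1 : (d i ^ 2 / 2) * (β * (∑ k, (A k i) ^ 2) + 1 / β)
          ≤ (d i ^ 2 / 2) * L := by
        apply mul_le_mul_of_nonneg_left (hL i) (by positivity)
      linarith
    -- scalar optimality of the prox step
    have hopt : 0 ≤ (g i + L * d i) * ((xβ i - x i) - d i) := by
      rcases le_or_gt 0 (x i - (1 / L) * g i) with h | h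
      · have hmax : max 0 (x i - (1 / L) * g i) = x i - (1 / L) * g i := max_eq_right h
        have hdi : d i = -((1 / L) * g i) := by simp only [hd, hmax]; ring
        have : g i + L * d i = 0 := by
          rw [hdi]; field_simp; ring
        rw [this, zero_mul]
      · have hmax : max 0 (x i - (1 / L) * g i) = 0 := max_eq_left h.le
        have hdi : d i = -x i := by simp only [hd, hmax]; ring
        have h1 : 0 ≤ g i + L * d i := by
          rw [hdi]
          have : L * x i < L * ((1 / L) * g i) :=
            mul_lt_mul_of_pos_left (by linarith) hLpos
          have h2 : L * ((1 / L) * g i) = g i := by field_simp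
          linarith
        have h2 : 0 ≤ (xβ i - x i) - d i := by
          rw [hdi]; have := hβnn i; linarith
        exact mul_nonneg h1 h2
    have hT : 2 * d i * (x i - xβ i) + 2 * d i ^ 2 + (2 / L) * (g i * d i)
        ≤ -(2 / L) * (g i * (x i - xβ i)) := by
      have h1 : L * d i * (x i - xβ i) + L * d i ^ 2 + g i * d i
          ≤ -(g i * (x i - xβ i)) := by nlinarith [hopt]
      have h2 : 2 * d i * (x i - xβ i) + 2 * d i ^ 2 + (2 / L) * (g i * d i)
          = (2 / L) * (L * d i * (x i - xβ i) + L * d i ^ 2 + g i * d i) := by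
        field_simp
      have h3 : (2 / L) * (L * d i * (x i - xβ i) + L * d i ^ 2 + g i * d i)
          ≤ (2 / L) * (-(g i * (x i - xβ i))) :=
        mul_le_mul_of_nonneg_left h1 (by positivity)
      rw [h2]; linarith
    have h2L : (0:ℝ) ≤ 2 / L := by positivity
    have h := mul_le_mul_of_nonneg_left hfup h2L
    have hexp : (2 / L) * (fpen A b c ub xb β x + d i * g i + (L / 2) * d i ^ 2)
        = (2 / L) * fpen A b c ub xb β x + (2 / L) * (g i * d i) + d i ^ 2 := by
      field_simp
    rw [hexp] at h
    rw [hVup]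
    linarith [h, hT]
  -- sum over coordinates
  have hsum : ∑ i, ((∑ j, (scdStep A b c ub xb β L x i j - xβ j) ^ 2)
      + (2 / L) * (fpen A b c ub xb β (scdStep A b c ub xb β L x i)
          - fpen A b c ub xb β xβ))
      ≤ (n : ℝ) * (V + (2 / L) * F) + (-(2 / L)) * rdot g (x - xβ) := by
    calc ∑ i, ((∑ j, (scdStep A b c ub xb β L x i j - xβ j) ^ 2)
        + (2 / L) * (fpen A b c ub xb β (scdStep A b c ub xb β L x i)
            - fpen A b c ub xb β xβ))
        ≤ ∑ i, (V + (2 / L) * F + (-(2 / L) * (g i * (x i - xβ i)))) :=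
          Finset.sum_le_sum fun i _ => hTbound i
      _ = (n : ℝ) * (V + (2 / L) * F) + (-(2 / L)) * rdot g (x - xβ) := by
          simp only [rdot, Pi.sub_apply]
          rw [Finset.sum_add_distrib, Finset.sum_const, Finset.card_univ, Fintype.card_fin,
            nsmul_eq_mul, ← Finset.mul_sum]
  -- strong convexity bound
  have hsc : rdot g (xβ - x) ≤ -F - (l / 2) * V := by
    have := scd_fpen_strong_convex A b c ub xb β hβ x xβ
    have heq : ∑ i, (xβ i - x i) ^ 2 = V := by
      rw [hV]; exact Finset.sum_congr rfl fun j _ => by ring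
    rw [heq, ← hg, show (1:ℝ) / (2 * β) = (1 / β) / 2 by ring] at this
    simp only [hF, hldef]
    linarith
  have hrd : rdot g (x - xβ) = - rdot g (xβ - x) := by
    simp only [rdot, Pi.sub_apply, ← Finset.sum_neg_distrib]
    exact Finset.sum_congr rfl fun j _ => by ring
  have hchain : ∑ i, ((∑ j, (scdStep A b c ub xb β L x i j - xβ j) ^ 2)
      + (2 / L) * (fpen A b c ub xb β (scdStep A b c ub xb β L x i)
          - fpen A b c ub xb β xβ))
      ≤ (n : ℝ) * (V + (2 / L) * F) - (2 / L) * F - (l / L) * V := by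
    have h1 : (-(2 / L)) * rdot g (x - xβ) = (2 / L) * rdot g (xβ - x) := by
      rw [hrd]; ring
    have h2 : (2 / L) * rdot g (xβ - x) ≤ (2 / L) * (-F - (l / 2) * V) :=
      mul_le_mul_of_nonneg_left hsc (by positivity)
    have h3 : (2 / L) * (-F - (l / 2) * V) = -(2 / L) * F - (l / L) * V := by
      field_simp
    rw [h1] at hsum
    linarith
  -- final comparison
  have hn0 : (0:ℝ) < n := Nat.cast_pos.mpr hn
  have hD : (0:ℝ) < l + L := by linarith
  have hfinal : (n : ℝ) * (V + (2 / L) * F) - (2 / L) * F - (l / L) * V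
      ≤ (n : ℝ) * (1 - l / (n * (l + L))) * (V + (2 / L) * F) := by
    have hnr : (n : ℝ) * (1 - l / (n * (l + L))) = n - l / (l + L) := by
      field_simp
    rw [hnr]
    have hkey : (l / (l + L)) * (V + (2 / L) * F) ≤ (l / L) * V + (2 / L) * F := by
      have hid : (l / L) * V + (2 / L) * F - (l / (l + L)) * (V + (2 / L) * F)
          = (l ^ 2 / (L * (l + L))) * V + (2 / (l + L)) * F := by
        field_simp
        ring
      nlinarith [mul_nonneg (by positivity : (0:ℝ) ≤ l ^ 2 / (L * (l + L))) hVnn,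
        mul_nonneg (by positivity : (0:ℝ) ≤ 2 / (l + L)) hFnn]
    have hexp2 : ((n:ℝ) - l / (l + L)) * (V + (2 / L) * F)
        = (n:ℝ) * (V + (2 / L) * F) - (l / (l + L)) * (V + (2 / L) * F) := by ring
    rw [hexp2]
    linarith [hkey]
  calc _ ≤ (n : ℝ) * (V + (2 / L) * F) - (2 / L) * F - (l / L) * V := hchain
    _ ≤ (n : ℝ) * (1 - l / (n * (l + L))) * (V + (2 / L) * F) := hfinal

/-- Deterministic unfolding of the SCD iteration along a finite list of coordinate choices. -/
noncomputable def scdIter {m n : ℕ} (A : Matrix (Fin m) (Fin n) ℝ) (b : Fin m → ℝ)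
    (c : Fin n → ℝ) (ub : Fin m → ℝ) (xb : Fin n → ℝ) (β L : ℝ) (x0 : Fin n → ℝ) :
    (j : ℕ) → (Fin j → Fin n) → (Fin n → ℝ)
  | 0, _ => x0
  | (j + 1), y => scdStep A b c ub xb β L
      (scdIter A b c ub xb β L x0 j (fun k => y k.castSucc)) (y (Fin.last j))

/-- Main deterministic estimate: the averaged potential contracts geometrically. -/
lemma scd_iter_bound {m n : ℕ} (hn : 0 < n)
    (A : Matrix (Fin m) (Fin n) ℝ) (b : Fin m → ℝ) (c : Fin n → ℝ)
    (ub : Fin m → ℝ) (xb : Fin n → ℝ) (β : ℝ) (hβ : 0 < β)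
    (xβ : Fin n → ℝ) (hβnn : ∀ j, 0 ≤ xβ j)
    (hβmin : ∀ x : Fin n → ℝ, (∀ j, 0 ≤ x j) →
      fpen A b c ub xb β xβ ≤ fpen A b c ub xb β x)
    (L : ℝ) (hLpos : 0 < L) (hL : ∀ i, β * (∑ k, (A k i) ^ 2) + 1 / β ≤ L)
    (x0 : Fin n → ℝ) (hx0 : ∀ j, 0 ≤ x0 j) : ∀ j : ℕ,
    (∀ z : Fin j → Fin n, ∀ i, 0 ≤ scdIter A b c ub xb β L x0 j z i) ∧
    ∑ y : Fin j → Fin n,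
        ((∑ i, (scdIter A b c ub xb β L x0 j y i - xβ i) ^ 2)
          + (2 / L) * (fpen A b c ub xb β (scdIter A b c ub xb β L x0 j y)
              - fpen A b c ub xb β xβ))
      ≤ ((n : ℝ) * (1 - (1 / β) / (n * (1 / β + L)))) ^ j
          * ((∑ i, (x0 i - xβ i) ^ 2)
            + (2 / L) * (fpen A b c ub xb β x0 - fpen A b c ub xb β xβ)) := by
  have hn0 : (0:ℝ) < n := Nat.cast_pos.mpr hn
  have hcontr : (0:ℝ) ≤ (n : ℝ) * (1 - (1 / β) / (n * (1 / β + L))) := by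
    have h1 : (0:ℝ) < (n:ℝ) * (1 / β + L) := mul_pos hn0 (by positivity)
    have h2 : (1 / β) / ((n:ℝ) * (1 / β + L)) ≤ 1 := by
      rw [div_le_one h1]
      have hcn : (1:ℝ) ≤ n := Nat.one_le_cast.mpr hn
      nlinarith [one_div_pos.mpr hβ, hLpos]
    nlinarith
  intro j
  induction j with
  | zero =>
    constructor
    · intro z i; exact hx0 i
    · haveI : Unique (Fin 0 → Fin n) := ⟨⟨fun k => k.elim0⟩, fun y => funext fun k => k.elim0⟩
      rw [Fintype.sum_unique]
      simp [scdIter]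
  | succ j ih =>
    obtain ⟨ihnn, ihsum⟩ := ih
    have hiter_succ : ∀ (z : Fin j → Fin n) (i : Fin n),
        scdIter A b c ub xb β L x0 (j + 1) (Fin.snoc z i)
          = scdStep A b c ub xb β L (scdIter A b c ub xb β L x0 j z) i := by
      intro z i
      simp only [scdIter, Fin.snoc_last, Fin.snoc_castSucc]
    constructor
    · intro z i
      have hz : z = Fin.snoc (fun k => z k.castSucc) (z (Fin.last j)) := by
        funext k
        refine Fin.lastCases ?_ ?_ k
        · rw [Fin.snoc_last]
        · intro k'; rw [Fin.snoc_castSucc]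
      rw [hz, hiter_succ]
      exact scdStep_nonneg A b c ub xb β L _ (ihnn _) _ i
    · set Φ : (Fin n → ℝ) → ℝ := fun x =>
        (∑ i, (x i - xβ i) ^ 2)
          + (2 / L) * (fpen A b c ub xb β x - fpen A b c ub xb β xβ) with hΦ
      have hsplit : ∑ y : Fin (j+1) → Fin n, Φ (scdIter A b c ub xb β L x0 (j+1) y)
          = ∑ z : Fin j → Fin n, ∑ i : Fin n,
              Φ (scdStep A b c ub xb β L (scdIter A b c ub xb β L x0 j z) i) := by
        rw [← Equiv.sum_comp (Fin.snocEquiv (fun _ => Fin n))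
          (fun y => Φ (scdIter A b c ub xb β L x0 (j+1) y)), Fintype.sum_prod_type]
        rw [Finset.sum_comm]
        refine Finset.sum_congr rfl fun z _ => Finset.sum_congr rfl fun i _ => ?_
        have : (Fin.snocEquiv (fun _ => Fin n)) (i, z) = Fin.snoc z i := by
          funext k; rfl
        rw [this, hiter_succ]
      rw [hsplit]
      calc ∑ z : Fin j → Fin n, ∑ i : Fin n,
            Φ (scdStep A b c ub xb β L (scdIter A b c ub xb β L x0 j z) i)
          ≤ ∑ z : Fin j → Fin n,
              (n : ℝ) * (1 - (1 / β) / (n * (1 / β + L)))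
                * Φ (scdIter A b c ub xb β L x0 j z) := by
            refine Finset.sum_le_sum fun z _ => ?_
            exact scd_key_step hn A b c ub xb β hβ xβ hβnn hβmin L hLpos hL
              (scdIter A b c ub xb β L x0 j z) (ihnn z)
        _ = (n : ℝ) * (1 - (1 / β) / (n * (1 / β + L)))
              * ∑ z : Fin j → Fin n, Φ (scdIter A b c ub xb β L x0 j z) := by
            rw [Finset.mul_sum]
        _ ≤ (n : ℝ) * (1 - (1 / β) / (n * (1 / β + L)))
              * (((n : ℝ) * (1 - (1 / β) / (n * (1 / β + L)))) ^ j * Φ x0) :=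
            mul_le_mul_of_nonneg_left ihsum hcontr
        _ = ((n : ℝ) * (1 - (1 / β) / (n * (1 / β + L)))) ^ (j + 1) * Φ x0 := by
            ring

/-- Theorem scd: expected linear convergence of the stochastic
coordinate descent method for the penalty problem. -/
theorem scd_expected_convergence
    {m n : ℕ} (hn : 0 < n)
    (A : Matrix (Fin m) (Fin n) ℝ) (b : Fin m → ℝ) (c : Fin n → ℝ)
    (ub : Fin m → ℝ) (xb : Fin n → ℝ) (β : ℝ) (hβ : 0 < β)
    -- x(β) : the minimizer of f_β over the nonnegative orthant, fβ* its value
    (xβ : Fin n → ℝ) (hβnn : ∀ j, 0 ≤ xβ j)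
    (hβmin : ∀ x : Fin n → ℝ, (∀ j, 0 ≤ x j) →
      fpen A b c ub xb β xβ ≤ fpen A b c ub xb β x)
    (fstar : ℝ) (hfstar : fstar = fpen A b c ub xb β xβ)
    -- the constants L_max = β maxᵢ A₋ᵢᵀA₋ᵢ + β⁻¹ and l = 1/β
    (Lmax l : ℝ)
    (hLmax : Lmax = β * (⨆ i : Fin n, ∑ j, (A j i) ^ 2) + β⁻¹)
    (hl : l = 1 / β)
    -- the underlying probability space and the i.i.d. uniform coordinate indices
    (Ω : Type*) [MeasurableSpace Ω] (μ : Measure Ω) [IsProbabilityMeasure μ]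
    (idx : ℕ → Ω → Fin n)
    (hmeas : ∀ j, Measurable (idx j))
    (hunif : ∀ j v, μ {ω | idx j ω = v} = (n : ENNReal)⁻¹)
    (hindep : iIndepFun idx μ)
    -- the SCD iterates
    (x0 : Fin n → ℝ) (hx0 : ∀ j, 0 ≤ x0 j)
    (X : ℕ → Ω → Fin n → ℝ)
    (hX0 : ∀ ω, X 0 ω = x0)
    (hstep : ∀ j ω, X (j + 1) ω = fun i =>
      if i = idx j ω then
        max 0 (X j ω i - (1 / Lmax) * gradf A b c ub xb β (X j ω) i)
      else X j ω i)
    -- R bounds the distance of all iterates from x(β), almost surely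
    (R : ℝ) (hR : ∀ j, ∀ᵐ ω ∂μ, l2norm (X j ω - xβ) ≤ R)
    (j : ℕ) :
    (∫ ω, l2norm (X j ω - xβ) ^ 2 ∂μ)
      + (2 / Lmax) * (∫ ω, (fpen A b c ub xb β (X j ω) - fstar) ∂μ)
    ≤ (1 - l / (n * (l + Lmax))) ^ j
        * (R ^ 2 + (2 / Lmax) * (fpen A b c ub xb β x0 - fstar)) := by
  haveI : Nonempty (Fin n) := Fin.pos_iff_nonempty.mp hn
  have hn0 : (0:ℝ) < n := Nat.cast_pos.mpr hn
  -- basic facts about Lmax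
  have hSnn : 0 ≤ ⨆ i : Fin n, ∑ k, (A k i) ^ 2 := by
    obtain ⟨i0⟩ := (inferInstance : Nonempty (Fin n))
    have h1 : (0:ℝ) ≤ ∑ k, (A k i0) ^ 2 := Finset.sum_nonneg fun k _ => sq_nonneg _
    exact h1.trans (le_ciSup (Set.Finite.bddAbove
      (Set.finite_range (fun i : Fin n => ∑ k, (A k i) ^ 2))) i0)
  have hLpos : 0 < Lmax := by
    rw [hLmax]
    have : 0 < β⁻¹ := by positivity
    nlinarith
  have hLbd : ∀ i, β * (∑ k, (A k i) ^ 2) + 1 / β ≤ Lmax := by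
    intro i
    rw [hLmax, one_div]
    have := le_ciSup (Set.Finite.bddAbove (Set.finite_range
      (fun i : Fin n => ∑ k, (A k i) ^ 2))) i
    nlinarith
  -- correspondence between the random iterates and the deterministic unfolding
  have hcorr : ∀ (j : ℕ) (ω : Ω),
      X j ω = scdIter A b c ub xb β Lmax x0 j (fun k : Fin j => idx k ω) := by
    intro j
    induction j with
    | zero => intro ω; rw [hX0]; rfl
    | succ j ih =>
      intro ω
      rw [hstep j ω]
      have hred : scdIter A b c ub xb β Lmax x0 (j+1) (fun k : Fin (j+1) => idx k ω)
          = scdStep A b c ub xb β Lmax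
              (scdIter A b c ub xb β Lmax x0 j (fun k : Fin j => idx k ω)) (idx j ω) := by
        simp only [scdIter, Fin.coe_castSucc, Fin.val_last]
      rw [hred, ← ih ω]
      funext i
      rw [scdStep, Function.update_apply]
      split_ifs with h
      · rw [h]
      · rfl
  -- law of the first j coordinate choices
  have hdist : ∀ (j : ℕ) (y : Fin j → Fin n),
      μ ((fun ω (k : Fin j) => idx k ω) ⁻¹' {y}) = ((n : ENNReal)⁻¹) ^ j := by
    intro j y
    classical
    set sets : ℕ → Set (Fin n) := fun k =>
      if h : k < j then {y ⟨k, h⟩} else Set.univ with hsets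
    have hpre : (fun ω (k : Fin j) => idx k ω) ⁻¹' {y}
        = ⋂ k ∈ Finset.range j, idx k ⁻¹' sets k := by
      ext ω
      simp only [Set.mem_preimage, Set.mem_singleton_iff, funext_iff, Set.mem_iInter,
        Finset.mem_range, hsets]
      constructor
      · intro h k hk
        simp only [dif_pos hk, Set.mem_singleton_iff]
        exact h ⟨k, hk⟩
      · intro h k
        have := h k k.isLt
        simp only [dif_pos k.isLt, Set.mem_singleton_iff, Fin.eta] at this
        exact this
    rw [hpre, (iIndepFun_iff_measure_inter_preimage_eq_mul.mp hindep) (Finset.range j)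
      (fun k hk => by
        by_cases h : k < j
        · rw [hsets]; simp only [dif_pos h]; exact measurableSet_singleton _
        · rw [hsets]; simp only [dif_neg h]; exact MeasurableSet.univ)]
    have : ∀ k ∈ Finset.range j, μ (idx k ⁻¹' sets k) = (n : ENNReal)⁻¹ := by
      intro k hk
      have hk' : k < j := Finset.mem_range.mp hk
      rw [hsets]
      simp only [dif_pos hk']
      have : idx k ⁻¹' {y ⟨k, hk'⟩} = {ω | idx k ω = y ⟨k, hk'⟩} := rfl
      rw [this, hunif]
    rw [Finset.prod_congr rfl this, Finset.prod_const, Finset.card_range]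
  -- integrals of functions of the iterates as finite sums
  have hint : ∀ (G : (Fin n → ℝ) → ℝ),
      ∫ ω, G (X j ω) ∂μ = ∑ y : Fin j → Fin n,
        ((n : ℝ)⁻¹) ^ j * G (scdIter A b c ub xb β Lmax x0 j y) := by
    intro G
    set Y : Ω → (Fin j → Fin n) := fun ω k => idx k ω with hY
    have hYmeas : Measurable Y := measurable_pi_lambda _ fun k => hmeas k
    haveI : IsProbabilityMeasure (μ.map Y) :=
      Measure.isProbabilityMeasure_map hYmeas.aemeasurable
    have h1 : ∫ ω, G (X j ω) ∂μ
        = ∫ ω, (fun y => G (scdIter A b c ub xb β Lmax x0 j y)) (Y ω) ∂μ := by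
      refine integral_congr_ae (Filter.Eventually.of_forall fun ω => ?_)
      dsimp only
      rw [hcorr j ω]
    have h2 := integral_map (μ := μ)
      (f := fun y => G (scdIter A b c ub xb β Lmax x0 j y)) hYmeas.aemeasurable
      ((measurable_of_countable _).stronglyMeasurable.aestronglyMeasurable)
    rw [h1, ← h2, integral_fintype (Integrable.of_finite)]
    refine Finset.sum_congr rfl fun y _ => ?_
    rw [Measure.real, Measure.map_apply hYmeas (measurableSet_singleton y), hdist j y, smul_eq_mul]
    congr 1
    simp [ENNReal.toReal_pow, ENNReal.toReal_inv]
  -- convert the two integrals into finite sums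
  subst hfstar hl
  have hG1 : ∫ ω, l2norm (X j ω - xβ) ^ 2 ∂μ
      = ∑ y : Fin j → Fin n, ((n : ℝ)⁻¹) ^ j
          * (∑ i, (scdIter A b c ub xb β Lmax x0 j y i - xβ i) ^ 2) := by
    have heq : ∫ ω, l2norm (X j ω - xβ) ^ 2 ∂μ
        = ∫ ω, (fun x => ∑ i, (x i - xβ i) ^ 2) (X j ω) ∂μ := by
      refine integral_congr_ae (Filter.Eventually.of_forall fun ω => ?_)
      dsimp only
      rw [scd_l2norm_sq, scd_dot_self_eq]
    rw [heq, hint (fun x => ∑ i, (x i - xβ i) ^ 2)]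
  have hG2 : ∫ ω, (fpen A b c ub xb β (X j ω) - fpen A b c ub xb β xβ) ∂μ
      = ∑ y : Fin j → Fin n, ((n : ℝ)⁻¹) ^ j
          * (fpen A b c ub xb β (scdIter A b c ub xb β Lmax x0 j y)
              - fpen A b c ub xb β xβ) :=
    hint (fun x => fpen A b c ub xb β x - fpen A b c ub xb β xβ)
  obtain ⟨hiternn, hitersum⟩ := scd_iter_bound hn A b c ub xb β hβ xβ hβnn hβmin
    Lmax hLpos hLbd x0 hx0 j
  -- the initial potential is bounded using R
  haveI : (ae μ).NeBot := ae_neBot.mpr (IsProbabilityMeasure.ne_zero μ)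
  obtain ⟨ω0, hω0⟩ := (hR 0).exists
  rw [hX0 ω0] at hω0
  have hx0R : ∑ i, (x0 i - xβ i) ^ 2 ≤ R ^ 2 := by
    have h1 : 0 ≤ l2norm (x0 - xβ) := Real.sqrt_nonneg _
    have h2 : l2norm (x0 - xβ) ^ 2 ≤ R ^ 2 := by nlinarith
    rw [scd_l2norm_sq, scd_dot_self_eq] at h2
    exact h2
  -- contraction factor facts
  have h1ρ : 0 ≤ 1 - (1 / β) / ((n : ℝ) * (1 / β + Lmax)) := by
    have h1 : (0:ℝ) < (n:ℝ) * (1 / β + Lmax) := mul_pos hn0 (by positivity)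
    have h2 : (1 / β) / ((n:ℝ) * (1 / β + Lmax)) ≤ 1 := by
      rw [div_le_one h1]
      have hcn : (1:ℝ) ≤ n := Nat.one_le_cast.mpr hn
      nlinarith [one_div_pos.mpr hβ, hLpos]
    linarith
  -- put everything together
  rw [hG1, hG2, Finset.mul_sum, ← Finset.sum_add_distrib]
  have hcomb : ∀ y : Fin j → Fin n,
      ((n : ℝ)⁻¹) ^ j * (∑ i, (scdIter A b c ub xb β Lmax x0 j y i - xβ i) ^ 2)
        + (2 / Lmax) * (((n : ℝ)⁻¹) ^ j
            * (fpen A b c ub xb β (scdIter A b c ub xb β Lmax x0 j y)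
                - fpen A b c ub xb β xβ))
      = ((n : ℝ)⁻¹) ^ j * ((∑ i, (scdIter A b c ub xb β Lmax x0 j y i - xβ i) ^ 2)
          + (2 / Lmax) * (fpen A b c ub xb β (scdIter A b c ub xb β Lmax x0 j y)
              - fpen A b c ub xb β xβ)) := fun y => by ring
  rw [Finset.sum_congr rfl fun y _ => hcomb y, ← Finset.mul_sum]
  have hinvnn : (0:ℝ) ≤ ((n : ℝ)⁻¹) ^ j := by positivity
  calc ((n : ℝ)⁻¹) ^ j * ∑ y : Fin j → Fin n,
        ((∑ i, (scdIter A b c ub xb β Lmax x0 j y i - xβ i) ^ 2)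
          + (2 / Lmax) * (fpen A b c ub xb β (scdIter A b c ub xb β Lmax x0 j y)
              - fpen A b c ub xb β xβ))
      ≤ ((n : ℝ)⁻¹) ^ j * (((n : ℝ) * (1 - (1 / β) / (n * (1 / β + Lmax)))) ^ j
          * ((∑ i, (x0 i - xβ i) ^ 2)
            + (2 / Lmax) * (fpen A b c ub xb β x0 - fpen A b c ub xb β xβ))) :=
        mul_le_mul_of_nonneg_left hitersum hinvnn
    _ = (1 - (1 / β) / ((n : ℝ) * (1 / β + Lmax))) ^ j
          * ((∑ i, (x0 i - xβ i) ^ 2)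
            + (2 / Lmax) * (fpen A b c ub xb β x0 - fpen A b c ub xb β xβ)) := by
        rw [← mul_assoc, ← mul_pow, ← mul_assoc, inv_mul_cancel₀ hn0.ne', one_mul]
    _ ≤ (1 - (1 / β) / ((n : ℝ) * (1 / β + Lmax))) ^ j
          * (R ^ 2 + (2 / Lmax) * (fpen A b c ub xb β x0 - fpen A b c ub xb β xβ)) := by
        refine mul_le_mul_of_nonneg_left ?_ (pow_nonneg h1ρ j)
        linarith
end

section
/- Let P be a packing program with data (A, b, c) ≥ 0, and let û ∈ [0,1]^m be an (ε, δ)-approximate solution of P. Then for any α ≥ ε / (min_{i=1,…,n} c_i), the point ũ := û/(1+α) is a (0, (δ+α)/(1+α))-approximate solution of P; in particular ũ is feasible (A^T ũ ≤ c, ũ ∈ [0,1]^m) and 0 ≤ b^T u* − b^T ũ ≤ ((δ+α)/(1+α)) b^T u*, where u* is an optimal solution of P. -/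
open Matrix Finset MeasureTheory ProbabilityTheory

/-- rounding an (ε,δ)-approximate solution of a packing program to a
feasible (0, (δ+α)/(1+α))-approximate solution by scaling. -/
theorem packing_round_infeasible_solution
    {m n : ℕ} (hn : 0 < n)
    (A : Matrix (Fin m) (Fin n) ℝ) (b : Fin m → ℝ) (c : Fin n → ℝ)
    -- nonnegative integer data, with c ≥ 1
    (hAint : ∀ j i, ∃ z : ℤ, A j i = z) (hAnn : ∀ j i, 0 ≤ A j i)
    (hbint : ∀ j, ∃ z : ℤ, b j = z) (hbnn : ∀ j, 0 ≤ b j)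
    (hcint : ∀ i, ∃ z : ℤ, c i = z) (hc1 : ∀ i, 1 ≤ c i)
    -- u* : an optimal solution of the packing program
    (ustar : Fin m → ℝ)
    (hus_box : ∀ j, 0 ≤ ustar j ∧ ustar j ≤ 1)
    (hus_pack : ∀ i, Aᵀ.mulVec ustar i ≤ c i)
    (hus_opt : ∀ v : Fin m → ℝ, (∀ j, 0 ≤ v j ∧ v j ≤ 1) →
      (∀ i, Aᵀ.mulVec v i ≤ c i) → rdot b v ≤ rdot b ustar)
    -- û ∈ [0,1]^m : an (ε,δ)-approximate solution of the packing program
    (ε δ : ℝ) (hε : 0 ≤ ε) (hδ : 0 ≤ δ)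
    (uhat : Fin m → ℝ)
    (hhat_box : ∀ j, 0 ≤ uhat j ∧ uhat j ≤ 1)
    (hhat_pack : ∀ i, Aᵀ.mulVec uhat i ≤ c i + ε)
    (hhat_obj : |rdot b uhat - rdot b ustar| ≤ δ * rdot b ustar)
    -- the scaling parameter α ≥ ε / minᵢ cᵢ
    (α : ℝ) (hα : ε / (⨅ i : Fin n, c i) ≤ α)
    -- ũ := û/(1+α)
    (util : Fin m → ℝ) (hutil : util = fun j => uhat j / (1 + α)) :
    (∀ j, 0 ≤ util j ∧ util j ≤ 1) ∧
    (∀ i, Aᵀ.mulVec util i ≤ c i) ∧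
    0 ≤ rdot b ustar - rdot b util ∧
    rdot b ustar - rdot b util ≤ ((δ + α) / (1 + α)) * rdot b ustar := by

  have hne : Nonempty (Fin n) := ⟨⟨0, hn⟩⟩
  have hinf1 : (1:ℝ) ≤ ⨅ i : Fin n, c i := le_ciInf hc1
  have hinfpos : (0:ℝ) < ⨅ i : Fin n, c i := lt_of_lt_of_le one_pos hinf1
  have hα0 : 0 ≤ α := le_trans (div_nonneg hε hinfpos.le) hα
  have h1αpos : (0:ℝ) < 1 + α := by linarith
  have hεα : ∀ i, ε ≤ α * c i := by
    intro i
    have h1 : ε ≤ α * (⨅ i : Fin n, c i) := (div_le_iff₀ hinfpos).mp hα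
    have h2 : (⨅ i : Fin n, c i) ≤ c i := ciInf_le (Finite.bddBelow_range _) i
    nlinarith
  have hbox : ∀ j, 0 ≤ util j ∧ util j ≤ 1 := by
    intro j
    rw [hutil]
    constructor
    · exact div_nonneg (hhat_box j).1 h1αpos.le
    · rw [div_le_one h1αpos]; linarith [(hhat_box j).2]
  have hmul : ∀ (v : Fin m → ℝ) i, Aᵀ.mulVec v i = ∑ j, A j i * v j := by
    intro v i; simp [Matrix.mulVec, dotProduct, Matrix.transpose]
  have hpack : ∀ i, Aᵀ.mulVec util i ≤ c i := by
    intro i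
    rw [hmul]
    have heq : ∑ j, A j i * util j = (∑ j, A j i * uhat j) / (1+α) := by
      rw [Finset.sum_div]; apply Finset.sum_congr rfl; intro j _
      rw [hutil]; ring
    rw [heq, div_le_iff₀ h1αpos]
    have h := hhat_pack i
    rw [hmul] at h
    have := hεα i
    nlinarith
  have hrd : rdot b util = rdot b uhat / (1+α) := by
    rw [rdot, rdot, Finset.sum_div]; apply Finset.sum_congr rfl; intro j _
    rw [hutil]; ring
  have hopt := hus_opt util hbox hpack
  have hstar_nn : 0 ≤ rdot b ustar :=
    Finset.sum_nonneg fun j _ => mul_nonneg (hbnn j) (hus_box j).1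
  have habs := abs_le.mp hhat_obj
  refine ⟨hbox, hpack, by linarith, ?_⟩
  rw [hrd]
  have goal' : (rdot b ustar - rdot b uhat / (1 + α)) * (1+α)
      ≤ ((δ + α) / (1 + α) * rdot b ustar) * (1+α) := by
    field_simp
    nlinarith [habs.1, hstar_nn, hα0, hδ]
  exact le_of_mul_le_mul_right goal' h1αpos
end

section
/- Let G = (V, E) be a graph with |V| = n ≥ 3 and |E| = m, and let (A, b) be the constraint data of the vertex-cover LP written as Ax ≥ b, x ≥ 0 (rows e_u^T + e_v^T with right-hand side 1 for each edge (u,v) ∈ E, and rows −e_v^T with right-hand side −1 for each vertex v encoding x_v ≤ 1). If (ΔA, Δb) is any perturbation such that the perturbed system (A + ΔA)x ≥ b + Δb has no solution x ≥ 0, then max(‖ΔA‖_F, ‖Δb‖₂) ≥ 1/(4√n). Consequently, the primal distance to infeasibility of the vertex-cover LP is at least 1/(4√n), i.e. δ_P ≥ ‖d‖^{-1} n^{-1/2}/4. -/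
open Matrix Finset MeasureTheory ProbabilityTheory

/-- Feasibility of the inequality-form primal LP `Ax ≥ b, x ≥ 0`. -/
def PrimalFeasibleIneq {ι κ : Type*} [Fintype ι] [Fintype κ]
    (A : Matrix ι κ ℝ) (b : ι → ℝ) : Prop :=
  ∃ x : κ → ℝ, (∀ j, 0 ≤ x j) ∧ ∀ i, b i ≤ A.mulVec x i

/-- Feasibility of the dual `Aᵀy ≤ c, y ≥ 0` of an inequality-form primal LP. -/
def DualFeasibleIneq {ι κ : Type*} [Fintype ι] [Fintype κ]
    (A : Matrix ι κ ℝ) (c : κ → ℝ) : Prop :=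
  ∃ y : ι → ℝ, (∀ i, 0 ≤ y i) ∧ ∀ j, Aᵀ.mulVec y j ≤ c j

/-- Norm of the data `d = (A, b, c)`: `max(‖A‖_F, ‖b‖₂, ‖c‖₂)`. -/
noncomputable def dnorm {ι κ : Type*} [Fintype ι] [Fintype κ]
    (A : Matrix ι κ ℝ) (b : ι → ℝ) (c : κ → ℝ) : ℝ :=
  max (frobNorm A) (max (l2norm b) (l2norm c))

/-- Distance of the data to primal infeasibility (inequality form). -/
noncomputable def distPriIneq {ι κ : Type*} [Fintype ι] [Fintype κ]
    (A : Matrix ι κ ℝ) (b : ι → ℝ) (c : κ → ℝ) : ℝ :=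
  sInf { r : ℝ | ∃ (dA : Matrix ι κ ℝ) (db : ι → ℝ) (dc : κ → ℝ),
    ¬ PrimalFeasibleIneq (A + dA) (b + db) ∧ r = dnorm dA db dc }

/-- Distance of the data to dual infeasibility (inequality form). -/
noncomputable def distDualIneq {ι κ : Type*} [Fintype ι] [Fintype κ]
    (A : Matrix ι κ ℝ) (b : ι → ℝ) (c : κ → ℝ) : ℝ :=
  sInf { r : ℝ | ∃ (dA : Matrix ι κ ℝ) (db : ι → ℝ) (dc : κ → ℝ),
    ¬ DualFeasibleIneq (A + dA) (c + dc) ∧ r = dnorm dA db dc }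

/-- Renegar primal condition number `δ_P` (inequality form). -/
noncomputable def deltaPIneq {ι κ : Type*} [Fintype ι] [Fintype κ]
    (A : Matrix ι κ ℝ) (b : ι → ℝ) (c : κ → ℝ) : ℝ := distPriIneq A b c / dnorm A b c

/-- Renegar dual condition number `δ_D` (inequality form). -/
noncomputable def deltaDIneq {ι κ : Type*} [Fintype ι] [Fintype κ]
    (A : Matrix ι κ ℝ) (b : ι → ℝ) (c : κ → ℝ) : ℝ := distDualIneq A b c / dnorm A b c

/-- Constraint matrix of the vertex-cover LP in inequality form `Ax ≥ b, x ≥ 0`: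
one row `e_uᵀ + e_vᵀ` per edge and one row `−e_vᵀ` per vertex. -/
noncomputable def vcMat {n m : ℕ} (E : Fin m → Fin n × Fin n) :
    Matrix (Fin m ⊕ Fin n) (Fin n) ℝ :=
  Matrix.of (Sum.elim
    (fun e w => (if w = (E e).1 then (1 : ℝ) else 0) + (if w = (E e).2 then (1 : ℝ) else 0))
    (fun v w => if w = v then (-1 : ℝ) else 0))

/-- Right-hand side of the vertex-cover LP in inequality form: `1` for edge rows,
`−1` for the rows encoding `x_v ≤ 1`. -/
noncomputable def vcRhs (n m : ℕ) : Fin m ⊕ Fin n → ℝ :=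
  Sum.elim (fun _ => (1 : ℝ)) (fun _ => (-1 : ℝ))

/-- any perturbation rendering the vertex-cover primal LP infeasible
has size at least `1/(4√n)`; consequently the primal distance to infeasibility is at
least `1/(4√n)` and `δ_P ≥ ‖d‖⁻¹ n^{-1/2}/4`. -/
theorem vertex_cover_primal_distance_to_infeasibility
    (n m : ℕ) (hn : 3 ≤ n)
    (E : Fin m → Fin n × Fin n) (hE : ∀ e, (E e).1 ≠ (E e).2)
    (A : Matrix (Fin m ⊕ Fin n) (Fin n) ℝ) (hA : A = vcMat E)
    (b : Fin m ⊕ Fin n → ℝ) (hb : b = vcRhs n m)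
    (c : Fin n → ℝ) (hc : c = fun _ => (1 : ℝ)) :
    (∀ (dA : Matrix (Fin m ⊕ Fin n) (Fin n) ℝ) (db : Fin m ⊕ Fin n → ℝ),
      ¬ PrimalFeasibleIneq (A + dA) (b + db) →
        1 / (4 * Real.sqrt n) ≤ max (frobNorm dA) (l2norm db)) ∧
    1 / (4 * Real.sqrt n) ≤ distPriIneq A b c ∧
    (dnorm A b c)⁻¹ * (Real.sqrt n)⁻¹ / 4 ≤ deltaPIneq A b c := by
  subst hA hb hc
  have hn3 : (3:ℝ) ≤ (n:ℝ) := by exact_mod_cast hn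
  have hs3 : (17/10:ℝ) ≤ Real.sqrt n := by
    have h1 : ((17:ℝ)/10) = Real.sqrt ((17/10)^2) := by
      rw [Real.sqrt_sq (by norm_num)]
    rw [h1]
    exact Real.sqrt_le_sqrt (by nlinarith)
  have hspos : (0:ℝ) < Real.sqrt n := by linarith
  have hε : 1/(4*Real.sqrt n) ≤ 3/20 := by
    rw [div_le_iff₀ (by linarith)]
    linarith
  -- Key feasibility lemma
  have key : ∀ (dA : Matrix (Fin m ⊕ Fin n) (Fin n) ℝ) (db : Fin m ⊕ Fin n → ℝ),
      max (frobNorm dA) (l2norm db) < 1/(4*Real.sqrt n) →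
      PrimalFeasibleIneq (vcMat E + dA) (vcRhs n m + db) := by
    intro dA db hlt
    have hdAF : frobNorm dA < 1/(4*Real.sqrt n) := lt_of_le_of_lt (le_max_left _ _) hlt
    have hdbF : l2norm db < 1/(4*Real.sqrt n) := lt_of_le_of_lt (le_max_right _ _) hlt
    refine ⟨fun _ => 2/3, fun _ => by norm_num, ?_⟩
    intro i
    have hdbi : |db i| < 3/20 := by
      have h1 : (db i)^2 ≤ ∑ k, (db k)^2 :=
        Finset.single_le_sum (f := fun k => db k ^ 2) (fun k _ => sq_nonneg _) (Finset.mem_univ i)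
      have h2 := Real.sqrt_le_sqrt h1
      rw [Real.sqrt_sq_eq_abs] at h2
      have h3 : |db i| ≤ l2norm db := h2
      linarith
    have hrow : |∑ j, dA i j| < 1/4 := by
      have hcs : (∑ j, dA i j)^2 ≤ (∑ j, (dA i j)^2) * (n:ℝ) := by
        have h := Finset.sum_mul_sq_le_sq_mul_sq Finset.univ (dA i) (fun _ => (1:ℝ))
        simpa using h
      have hrowF : ∑ j, (dA i j)^2 ≤ ∑ i', ∑ j, (dA i' j)^2 :=
        Finset.single_le_sum (f := fun i' => ∑ j, dA i' j ^ 2)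
          (fun _ _ => Finset.sum_nonneg fun _ _ => sq_nonneg _) (Finset.mem_univ i)
      have h2 : (∑ j, dA i j)^2 ≤ (∑ i', ∑ j, (dA i' j)^2) * (n:ℝ) := by
        nlinarith [sq_nonneg (∑ j, dA i j)]
      have h3 := Real.sqrt_le_sqrt h2
      rw [Real.sqrt_sq_eq_abs,
        Real.sqrt_mul (x := ∑ i', ∑ j, (dA i' j)^2) (Finset.sum_nonneg fun _ _ => Finset.sum_nonneg fun _ _ => sq_nonneg _)]
        at h3
      have h4 : |∑ j, dA i j| ≤ frobNorm dA * Real.sqrt n := h3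
      have h5 : frobNorm dA * Real.sqrt n < (1/(4*Real.sqrt n)) * Real.sqrt n :=
        mul_lt_mul_of_pos_right hdAF hspos
      have h6 : (1/(4*Real.sqrt n)) * Real.sqrt n = 1/4 := by
        field_simp
      linarith
    have hmv : (vcMat E + dA).mulVec (fun _ => (2:ℝ)/3) i
        = (vcMat E).mulVec (fun _ => (2:ℝ)/3) i + (∑ j, dA i j) * (2/3) := by
      simp [Matrix.mulVec, dotProduct, Matrix.add_apply, add_mul,
        Finset.sum_add_distrib, Finset.sum_mul]
    have habs1 := abs_lt.1 hdbi
    have habs2 := abs_lt.1 hrow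
    rcases i with e | v
    · have hAe : (vcMat E).mulVec (fun _ => (2:ℝ)/3) (Sum.inl e) = 4/3 := by
        simp [vcMat, Matrix.mulVec, dotProduct, add_mul, Finset.sum_add_distrib]
        norm_num
      rw [Pi.add_apply, hmv, hAe]
      simp only [vcRhs, Sum.elim_inl]
      nlinarith [habs1.1, habs1.2, habs2.1, habs2.2]
    · have hAv : (vcMat E).mulVec (fun _ => (2:ℝ)/3) (Sum.inr v) = -(2/3) := by
        simp [vcMat, Matrix.mulVec, dotProduct]
      rw [Pi.add_apply, hmv, hAv]
      simp only [vcRhs, Sum.elim_inr]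
      nlinarith [habs1.1, habs1.2, habs2.1, habs2.2]
  have part1 : ∀ (dA : Matrix (Fin m ⊕ Fin n) (Fin n) ℝ) (db : Fin m ⊕ Fin n → ℝ),
      ¬ PrimalFeasibleIneq (vcMat E + dA) (vcRhs n m + db) →
        1 / (4 * Real.sqrt n) ≤ max (frobNorm dA) (l2norm db) := by
    intro dA db h
    by_contra hcon
    push_neg at hcon
    exact h (key dA db hcon)
  have hinf : ¬ PrimalFeasibleIneq (vcMat E + (-(vcMat E)))
      (vcRhs n m + fun _ => (10:ℝ)) := by
    rintro ⟨x, hx, hineq⟩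
    have hz : vcMat E + (-(vcMat E)) = 0 := by abel
    have h0 := hineq (Sum.inr ⟨0, by omega⟩)
    rw [hz, Matrix.zero_mulVec] at h0
    simp [vcRhs] at h0
  have part2 : 1 / (4 * Real.sqrt n) ≤
      distPriIneq (vcMat E) (vcRhs n m) (fun _ => (1:ℝ)) := by
    apply le_csInf
    · exact ⟨dnorm (-(vcMat E)) (fun _ => (10:ℝ)) 0,
        -(vcMat E), (fun _ => (10:ℝ)), 0, hinf, rfl⟩
    · rintro r ⟨dA, db, dc, hinfe, rfl⟩
      refine le_trans (part1 dA db hinfe) ?_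
      exact max_le_max le_rfl (le_max_left _ _)
  refine ⟨part1, part2, ?_⟩
  have hdn : 0 ≤ dnorm (vcMat E) (vcRhs n m) (fun _ => (1:ℝ)) :=
    le_trans (Real.sqrt_nonneg _) (le_max_left _ _)
  have hLHS : (dnorm (vcMat E) (vcRhs n m) (fun _ => (1:ℝ)))⁻¹ * (Real.sqrt n)⁻¹ / 4
      = 1/(4*Real.sqrt n) * (dnorm (vcMat E) (vcRhs n m) (fun _ => (1:ℝ)))⁻¹ := by
    rw [one_div, mul_inv]
    ring
  rw [hLHS, deltaPIneq, div_eq_mul_inv]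
  exact mul_le_mul_of_nonneg_right part2 (inv_nonneg.2 hdn)
end

section
/- Let (A, b, c) ≥ 0 be a covering program with variables in [0,1]^n, and suppose its slack measure satisfies s := s(A,b,c) > 0, attained at a feasible point x_S. If (ΔA, Δb) is any perturbation such that the perturbed covering system (A + ΔA)x ≥ b + Δb, 0 ≤ x ≤ 1 − Δb' (with all constraints, including the box constraints, perturbed by at most the stated amounts) is infeasible, then for some constraint row i either ‖ΔA_{i·}‖₂ > s n^{-1/2}/2 or the corresponding right-hand-side perturbation exceeds s/2 in absolute value; consequently the primal condition number satisfies δ_P ≥ ‖d‖^{-1} n^{-1/2} s(A,b,c)/2. -/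
open Matrix Finset MeasureTheory ProbabilityTheory

/-- The full constraint matrix `[A; −I]` of a covering program with box constraints
`x ≤ 1`, encoded in inequality form. -/
noncomputable def coverMat {m n : ℕ} (A : Matrix (Fin m) (Fin n) ℝ) :
    Matrix (Fin m ⊕ Fin n) (Fin n) ℝ :=
  Matrix.of (Sum.elim (fun j w => A j w) (fun v w => if w = v then (-1 : ℝ) else 0))

/-- The full right-hand side `[b; −1]` of a covering program with box constraints. -/
noncomputable def coverRhs {m : ℕ} (b : Fin m → ℝ) (n : ℕ) : Fin m ⊕ Fin n → ℝ :=
  Sum.elim b (fun _ => (-1 : ℝ))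

lemma l2norm_nonneg' {ι : Type*} [Fintype ι] (x : ι → ℝ) : 0 ≤ l2norm x :=
  Real.sqrt_nonneg _

lemma abs_rdot_le' {ι : Type*} [Fintype ι] (a x : ι → ℝ) :
    |rdot a x| ≤ l2norm a * l2norm x := by
  rw [rdot, l2norm, l2norm, ← Real.sqrt_mul (by positivity), ← Real.sqrt_sq_eq_abs]
  exact Real.sqrt_le_sqrt (Finset.sum_mul_sq_le_sq_mul_sq _ _ _)

lemma abs_le_l2norm' {ι : Type*} [Fintype ι] (x : ι → ℝ) (i : ι) : |x i| ≤ l2norm x := by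
  rw [l2norm, ← Real.sqrt_sq_eq_abs]
  exact Real.sqrt_le_sqrt (Finset.single_le_sum (f := fun j => x j ^ 2)
    (fun j _ => sq_nonneg _) (Finset.mem_univ i))

lemma row_le_frobNorm' {ι κ : Type*} [Fintype ι] [Fintype κ] (M : Matrix ι κ ℝ) (i : ι) :
    l2norm (M i) ≤ frobNorm M := by
  rw [l2norm, frobNorm]
  exact Real.sqrt_le_sqrt (Finset.single_le_sum (f := fun r => ∑ w, M r w ^ 2)
    (fun r _ => Finset.sum_nonneg fun w _ => sq_nonneg _) (Finset.mem_univ i))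

/-- primal distance to infeasibility of a covering program in terms of
its slack measure `s(A,b,c)`. -/
theorem covering_primal_distance_to_infeasibility
    (m n : ℕ) (hm : 0 < m) (hn : 0 < n)
    (A : Matrix (Fin m) (Fin n) ℝ) (b : Fin m → ℝ) (c : Fin n → ℝ)
    (hAnn : ∀ j i, 0 ≤ A j i) (hbnn : ∀ j, 0 ≤ b j) (hcnn : ∀ i, 0 ≤ c i)
    -- the slack measure s = s(A,b,c) > 0, attained at a feasible point x_S
    (s : ℝ) (hspos : 0 < s)
    (xS : Fin n → ℝ)
    (hxS_box : ∀ i, 0 ≤ xS i ∧ xS i ≤ 1)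
    (hxS_cov : ∀ j, b j ≤ rdot (A j) xS)
    (hs : s = min (⨅ i : Fin n, (1 - xS i)) (⨅ j : Fin m, (rdot (A j) xS - b j)))
    (hsmax : ∀ x : Fin n → ℝ, (∀ i, 0 ≤ x i ∧ x i ≤ 1) → (∀ j, b j ≤ rdot (A j) x) →
      min (⨅ i : Fin n, (1 - x i)) (⨅ j : Fin m, (rdot (A j) x - b j)) ≤ s) :
    -- any perturbation making the (fully perturbed) covering system infeasible is
    -- large in some row, and consequently δ_P ≥ ‖d‖⁻¹ n^{-1/2} s / 2
    (∀ (dM : Matrix (Fin m ⊕ Fin n) (Fin n) ℝ) (dβ : Fin m ⊕ Fin n → ℝ),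
      ¬ PrimalFeasibleIneq (coverMat A + dM) (coverRhs b n + dβ) →
        ∃ r : Fin m ⊕ Fin n,
          s * (Real.sqrt n)⁻¹ / 2 < l2norm (dM r) ∨ s / 2 < |dβ r|) ∧
    (dnorm (coverMat A) (coverRhs b n) c)⁻¹ * (Real.sqrt n)⁻¹ * s / 2 ≤
      deltaPIneq (coverMat A) (coverRhs b n) c := by
  haveI : Nonempty (Fin n) := ⟨⟨0, hn⟩⟩
  haveI : Nonempty (Fin m) := ⟨⟨0, hm⟩⟩
  have hs1 : ∀ i, s ≤ 1 - xS i := by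
    intro i; rw [hs]
    exact le_trans (min_le_left _ _) (ciInf_le (Finite.bddBelow_range _) i)
  have hs2 : ∀ j, s ≤ rdot (A j) xS - b j := by
    intro j; rw [hs]
    exact le_trans (min_le_right _ _) (ciInf_le (Finite.bddBelow_range _) j)
  have hsn : (1:ℝ) ≤ Real.sqrt n := by
    rw [show (1:ℝ) = Real.sqrt 1 by simp]
    exact Real.sqrt_le_sqrt (by exact_mod_cast hn)
  have hsnpos : (0:ℝ) < Real.sqrt n := lt_of_lt_of_le one_pos hsn
  have hxSnorm : l2norm xS ≤ Real.sqrt n := by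
    rw [l2norm]
    apply Real.sqrt_le_sqrt
    calc ∑ i, xS i ^ 2 ≤ ∑ _i : Fin n, (1:ℝ) := by
          refine Finset.sum_le_sum fun i _ => ?_
          have h := hxS_box i; nlinarith [h.1, h.2]
      _ = n := by simp
  -- Part 1
  have key : ∀ (dM : Matrix (Fin m ⊕ Fin n) (Fin n) ℝ) (dβ : Fin m ⊕ Fin n → ℝ),
      ¬ PrimalFeasibleIneq (coverMat A + dM) (coverRhs b n + dβ) →
        ∃ r : Fin m ⊕ Fin n,
          s * (Real.sqrt n)⁻¹ / 2 < l2norm (dM r) ∨ s / 2 < |dβ r| := by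
    intro dM dβ hinf
    by_contra hcon
    push_neg at hcon
    apply hinf
    refine ⟨xS, fun i => (hxS_box i).1, ?_⟩
    intro r
    have hdot : |rdot (dM r) xS| ≤ s / 2 := by
      calc |rdot (dM r) xS| ≤ l2norm (dM r) * l2norm xS := abs_rdot_le' _ _
        _ ≤ (s * (Real.sqrt n)⁻¹ / 2) * Real.sqrt n :=
            mul_le_mul (hcon r).1 hxSnorm (l2norm_nonneg' _) (by positivity)
        _ = s / 2 := by field_simp
    have hdot1 := (abs_le.mp hdot).1
    have hdβ := (abs_le.mp (hcon r).2).2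
    have hmv : (coverMat A + dM).mulVec xS r = (coverMat A).mulVec xS r + rdot (dM r) xS := by
      simp [Matrix.mulVec, dotProduct, rdot, add_mul, Finset.sum_add_distrib]
    rw [hmv]
    cases r with
    | inl j =>
      have hcov : (coverMat A).mulVec xS (Sum.inl j) = rdot (A j) xS := by
        simp [coverMat, Matrix.mulVec, dotProduct, rdot]
      rw [hcov]
      have h2 := hs2 j
      have : coverRhs b n (Sum.inl j) = b j := rfl
      simp only [Pi.add_apply, this]
      linarith
    | inr v =>
      have hcov : (coverMat A).mulVec xS (Sum.inr v) = -xS v := by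
        simp [coverMat, Matrix.mulVec, dotProduct]
      rw [hcov]
      have h1 := hs1 v
      have : coverRhs b n (Sum.inr v) = -1 := rfl
      simp only [Pi.add_apply, this]
      linarith
  refine ⟨key, ?_⟩
  -- Part 2
  set D := dnorm (coverMat A) (coverRhs b n) c with hDdef
  have hfrob1 : (1:ℝ) ≤ frobNorm (coverMat A) := by
    set v0 : Fin n := ⟨0, hn⟩
    have hrow : (1:ℝ) ≤ ∑ w, (coverMat A (Sum.inr v0) w) ^ 2 := by
      have h := Finset.single_le_sum (f := fun w => (coverMat A (Sum.inr v0) w) ^ 2)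
        (fun w _ => sq_nonneg _) (Finset.mem_univ v0)
      simpa [coverMat] using h
    have h1 : (1:ℝ) ≤ ∑ r, ∑ w, (coverMat A r w) ^ 2 :=
      hrow.trans (Finset.single_le_sum (f := fun r => ∑ w, coverMat A r w ^ 2)
        (fun r _ => Finset.sum_nonneg fun w _ => sq_nonneg _) (Finset.mem_univ (Sum.inr v0)))
    rw [frobNorm, show (1:ℝ) = Real.sqrt 1 by simp]
    exact Real.sqrt_le_sqrt h1
  have hD1 : (1:ℝ) ≤ D := le_trans hfrob1 (le_max_left _ _)
  have hDpos : (0:ℝ) < D := lt_of_lt_of_le one_pos hD1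
  have hdist : s * (Real.sqrt n)⁻¹ / 2 ≤ distPriIneq (coverMat A) (coverRhs b n) c := by
    apply le_csInf
    · refine ⟨dnorm (-coverMat A) (fun r => 1 - coverRhs b n r) 0,
        -coverMat A, (fun r => 1 - coverRhs b n r), 0, ?_, rfl⟩
      rintro ⟨x, hx, hineq⟩
      have h := hineq (Sum.inl ⟨0, hm⟩)
      have hz : coverMat A + -coverMat A = 0 := add_neg_cancel _
      rw [hz, Matrix.zero_mulVec] at h
      simp at h
      linarith
    · rintro r ⟨dA, db, dc, hinf, rfl⟩
      obtain ⟨r0, hr0⟩ := key dA db hinf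
      have hb : s * (Real.sqrt n)⁻¹ / 2 ≤ s / 2 := by
        have hinv : (Real.sqrt n)⁻¹ ≤ 1 := inv_le_one_of_one_le₀ hsn
        nlinarith [hspos.le]
      rcases hr0 with h | h
      · have h2 : l2norm (dA r0) ≤ frobNorm dA := row_le_frobNorm' _ _
        calc s * (Real.sqrt n)⁻¹ / 2 ≤ frobNorm dA := by linarith
          _ ≤ dnorm dA db dc := le_max_left _ _
      · have h2 : |db r0| ≤ l2norm db := abs_le_l2norm' _ _
        calc s * (Real.sqrt n)⁻¹ / 2 ≤ l2norm db := by linarith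
          _ ≤ dnorm dA db dc := le_trans (le_max_left _ _) (le_max_right _ _)
  rw [deltaPIneq]
  have heq : D⁻¹ * (Real.sqrt n)⁻¹ * s / 2 = (s * (Real.sqrt n)⁻¹ / 2) / D := by
    rw [div_eq_mul_inv (s * (Real.sqrt n)⁻¹ / 2)]; ring
  rw [heq, ← hDdef]
  exact (div_le_div_iff_of_pos_right hDpos).mpr hdist
end
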